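/- Let X be a topological space, x ∈ X, let H be a subset of π₁(X, x), and let K be a subgroup of π₁(X, x) containing the quasi-small loop group π₁^qs(X, x). Then H ⊆ K if and only if π_H^qs(X, x) ⊆ K. In particular, π_K^qs(X, x) = K. -/

import Mathlib

open unitInterval

noncomputable section

attribute [local instance] Path.Homotopic.setoid

variable {X Y : Type*} [TopologicalSpace X] [TopologicalSpace Y]

/-- `HClose f g` : the path `f` is homotopically close to the path `g` rel `∂I`:
for every partition `0 = t₀ < t₁ < ⋯ < tₙ = 1` and every sequence of open sets
`U₁, …, Uₙ` with `g [tᵢ₋₁, tᵢ] ⊆ Uᵢ`, there is a path `γ`, homotopic to `f` rel `∂I`,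
with `γ [tᵢ₋₁, tᵢ] ⊆ Uᵢ` and `γ tᵢ = g tᵢ` for all `i`. -/
def HClose {a b : X} (f g : Path a b) : Prop :=
  ∀ (n : ℕ) (t : Fin (n + 1) → I), t 0 = 0 → t (Fin.last n) = 1 → StrictMono t →
    ∀ U : Fin n → Set X, (∀ i, IsOpen (U i)) →
      (∀ i : Fin n, g '' Set.Icc (t i.castSucc) (t i.succ) ⊆ U i) →
      ∃ γ : Path a b,
        (∀ i : Fin n, γ '' Set.Icc (t i.castSucc) (t i.succ) ⊆ U i) ∧
        (∀ i : Fin (n + 1), γ (t i) = g (t i)) ∧ γ.Homotopic f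

/-- The class of a loop at `x` as an element of the fundamental group. -/
def pathClass {x : X} (f : Path x x) : FundamentalGroup X x :=
  FundamentalGroup.fromPath ⟦f⟧

/-- The `H`-quasi-small loop set `π_H^qs(X, x)`. -/
def qsSet (x : X) (H : Set (FundamentalGroup X x)) : Set (FundamentalGroup X x) :=
  { p | ∃ f h : Path x x, pathClass f = p ∧ pathClass h ∈ H ∧ HClose f h }

/-- The quasi-small loop group `π₁^qs(X, x)`. -/
def qs (x : X) : Set (FundamentalGroup X x) :=
  qsSet x (⊥ : Subgroup (FundamentalGroup X x))

/-- The Spanier group of `(X, x)` with respect to the cover `𝒰`. -/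
def spanierCover (x : X) (𝒰 : Set (Set X)) : Subgroup (FundamentalGroup X x) :=
  Subgroup.closure { p | ∃ (y : X) (u : Path x y) (v : Path y y) (U : Set X),
    U ∈ 𝒰 ∧ Set.range v ⊆ U ∧ p = pathClass ((u.trans v).trans u.symm) }

/-- The (unbased) Spanier group `π₁^sp(X, x)`. -/
def spanierGroup (x : X) : Subgroup (FundamentalGroup X x) :=
  ⨅ (𝒰 : Set (Set X)) (_ : ∀ U ∈ 𝒰, IsOpen U) (_ : ⋃₀ 𝒰 = Set.univ), spanierCover x 𝒰

/-- The small generated subgroup `π₁^sg(X, x)`. -/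
def smallGenerated (x : X) : Subgroup (FundamentalGroup X x) :=
  Subgroup.closure { p | ∃ (y : X) (β : Path x y) (α : Path y y),
    HClose α (Path.refl y) ∧ p = pathClass ((β.trans α).trans β.symm) }

/-- `X` is homotopically path Hausdorff relative to `H ⊆ π₁(X, x)`. -/
def HPHausdorffRel (x : X) (H : Set (FundamentalGroup X x)) : Prop :=
  ∀ (y : X) (α β : Path x y), pathClass (α.trans β.symm) ∉ H →
    ∃ (n : ℕ) (t : Fin (n + 1) → I), t 0 = 0 ∧ t (Fin.last n) = 1 ∧ StrictMono t ∧
      ∃ U : Fin n → Set X, (∀ i, IsOpen (U i)) ∧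
        (∀ i : Fin n, α '' Set.Icc (t i.castSucc) (t i.succ) ⊆ U i) ∧
        ∀ γ : Path x y, (∀ i : Fin n, γ '' Set.Icc (t i.castSucc) (t i.succ) ⊆ U i) →
          (∀ i : Fin (n + 1), γ (t i) = α (t i)) → pathClass (γ.trans β.symm) ∉ H

/-! ### Auxiliary lemmas -/

lemma hcloseRefl {a b : X} (f : Path a b) : HClose f f :=
  fun _n _t _h0 _h1 _hm _U _hUo hcov => ⟨f, hcov, fun _ => rfl, Path.Homotopic.refl f⟩

lemma pathClass_trans {x : X} (f g : Path x x) :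
    pathClass (f.trans g) = pathClass g * pathClass f :=
  Path.Homotopic.Quotient.mk_trans f g

lemma pathClass_trans_symm {x : X} (h : Path x x) : pathClass (h.trans h.symm) = 1 :=
  Quotient.sound ⟨(Path.Homotopy.reflTransSymm h).symm⟩

lemma pathClass_homotopic {x : X} {f g : Path x x} (h : f.Homotopic g) :
    pathClass f = pathClass g := by
  unfold pathClass
  rw [Quotient.sound h]

lemma pathClass_surjective {x : X} (p : FundamentalGroup X x) :
    ∃ f : Path x x, pathClass f = p := by
  obtain ⟨f, hf⟩ := Quotient.exists_rep (FundamentalGroup.toPath p)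
  exact ⟨f, hf⟩

lemma trans_apply_left {a b c : X} (q : Path a b) (p : Path b c) (w : I)
    (h : (w : ℝ) ≤ 1 / 2) : (q.trans p) w = q.extend (2 * w) := by
  rw [Path.trans_apply, dif_pos h]
  exact (q.extend_apply _).symm

lemma trans_apply_right {a b c : X} (q : Path a b) (p : Path b c) (w : I)
    (h : 1 / 2 ≤ (w : ℝ)) : (q.trans p) w = p.extend (2 * w - 1) := by
  rw [Path.trans_apply]
  split_ifs with h'
  · have hw : (w : ℝ) = 1 / 2 := le_antisymm h' h
    rw [show q ⟨2 * (w : ℝ), by constructor <;> linarith [w.2.1, w.2.2]⟩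
        = q.extend (2 * w) from (q.extend_apply _).symm, hw]
    norm_num
  · exact (p.extend_apply _).symm

/-- The key lemma: homotopic closeness is stable under right concatenation. -/
lemma HClose.trans {a b c : X} {f h : Path a b} (hfh : HClose f h) (p : Path b c) :
    HClose (f.trans p) (h.trans p) := by
  intro n t ht0 htn hmono U hUopen hcov
  classical
  -- the largest index with `t k < 1/2`
  set S : Finset (Fin (n + 1)) :=
    Finset.univ.filter (fun i : Fin (n + 1) => (t i : ℝ) < 1 / 2) with hS
  have h0S : (0 : Fin (n + 1)) ∈ S := by
    simp only [hS, Finset.mem_filter, Finset.mem_univ, true_and, ht0]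
    norm_num
  set k : Fin (n + 1) := S.max' ⟨0, h0S⟩ with hkdef
  have hk : (t k : ℝ) < 1 / 2 := by
    have := S.max'_mem ⟨0, h0S⟩
    simpa only [hS, Finset.mem_filter, Finset.mem_univ, true_and] using this
  have hkmax : ∀ j, (t j : ℝ) < 1 / 2 → j ≤ k := fun j hj =>
    S.le_max' j (by simp only [hS, Finset.mem_filter, Finset.mem_univ, true_and]; exact hj)
  have hkge : ∀ j : Fin (n + 1), (k : ℕ) < (j : ℕ) → 1 / 2 ≤ (t j : ℝ) := by
    intro j hj
    by_contra hlt
    have h1 := Fin.le_def.mp (hkmax j (not_le.mp hlt))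
    omega
  have hklast : k < Fin.last n := by
    refine lt_of_le_of_ne (Fin.le_last k) fun e => ?_
    rw [e, htn] at hk
    norm_num at hk
  have hkn : (k : ℕ) < n := by simpa [Fin.lt_def] using hklast
  have hcast : (k : ℕ) + 1 + 1 ≤ n + 1 := by omega
  -- the refined partition of the first half
  set s : Fin ((k : ℕ) + 1 + 1) → I :=
    (fun j => Set.projIcc 0 1 zero_le_one (2 * (t (Fin.castLE hcast j) : ℝ))) with hs
  have hsval : ∀ j : Fin ((k : ℕ) + 1 + 1), (j : ℕ) ≤ (k : ℕ) →
      (s j : ℝ) = 2 * (t (Fin.castLE hcast j) : ℝ) := by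
    intro j hj
    have h1 : t (Fin.castLE hcast j) ≤ t k := hmono.monotone (by simpa [Fin.le_def] using hj)
    have h2 : (0 : ℝ) ≤ (t (Fin.castLE hcast j) : ℝ) := (t _).2.1
    have : 2 * (t (Fin.castLE hcast j) : ℝ) ∈ Set.Icc (0 : ℝ) 1 := by
      constructor
      · linarith
      · have := Subtype.coe_le_coe.mpr h1
        linarith
    simp only [hs]
    rw [Set.projIcc_of_mem _ this]
  have hs_le : ∀ j : Fin ((k : ℕ) + 1 + 1),
      (s j : ℝ) ≤ 2 * (t (Fin.castLE hcast j) : ℝ) := by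
    intro j
    have h2 : (0 : ℝ) ≤ 2 * (t (Fin.castLE hcast j) : ℝ) := by
      have := (t (Fin.castLE hcast j)).2.1; linarith
    simp only [hs, Set.coe_projIcc]
    simp only [max_le_iff]
    constructor
    · exact h2
    · exact min_le_right _ _
  have hslast1 : (s (Fin.last _) : ℝ) = 1 := by
    have hlt : (k : ℕ) < ((Fin.castLE hcast (Fin.last ((k : ℕ) + 1))) : ℕ) := by
      simp
    have h12 : 1 / 2 ≤ (t (Fin.castLE hcast (Fin.last ((k : ℕ) + 1))) : ℝ) := hkge _ hlt
    simp only [hs, Set.coe_projIcc]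
    have : (1 : ℝ) ≤ 2 * (t (Fin.castLE hcast (Fin.last ((k : ℕ) + 1))) : ℝ) := by linarith
    rw [min_eq_left this, max_eq_right zero_le_one]
  have hs0 : s 0 = 0 := by
    apply Subtype.ext
    have h0 : ((0 : Fin ((k : ℕ) + 1 + 1)) : ℕ) ≤ (k : ℕ) := Nat.zero_le _
    rw [hsval 0 h0]
    have : Fin.castLE hcast (0 : Fin ((k : ℕ) + 1 + 1)) = 0 := rfl
    rw [this, ht0]
    norm_num
  have hslast : s (Fin.last _) = 1 := Subtype.ext (by rw [hslast1]; norm_num)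
  have hsmono : StrictMono s := by
    intro j j' hjj'
    have hj : (j : ℕ) ≤ (k : ℕ) := by
      have h1 : (j : ℕ) < (j' : ℕ) := hjj'
      have h2 : (j' : ℕ) < (k : ℕ) + 1 + 1 := j'.isLt
      omega
    rw [← Subtype.coe_lt_coe, hsval j hj]
    rcases le_or_gt (j' : ℕ) (k : ℕ) with hj' | hj'
    · rw [hsval j' hj']
      have : t (Fin.castLE hcast j) < t (Fin.castLE hcast j') :=
        hmono (by exact hjj')
      have := Subtype.coe_lt_coe.mpr this
      linarith
    · have hj'eq : j' = Fin.last _ := by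
        apply Fin.ext
        have := j'.isLt
        simp only [Fin.val_last]
        omega
      rw [hj'eq, hslast1]
      have h1 : t (Fin.castLE hcast j) ≤ t k := hmono.monotone (by simpa [Fin.le_def] using hj)
      have := Subtype.coe_le_coe.mpr h1
      linarith
  -- the refined open sets
  have hk1n : (k : ℕ) + 1 ≤ n := hkn
  set V : Fin ((k : ℕ) + 1) → Set X := (fun j => U (Fin.castLE hk1n j)) with hV
  have hVopen : ∀ j, IsOpen (V j) := fun j => hUopen _
  have hVcov : ∀ j : Fin ((k : ℕ) + 1), h '' Set.Icc (s j.castSucc) (s j.succ) ⊆ V j := by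
    rintro j _ ⟨w, ⟨hw1, hw2⟩, rfl⟩
    have hwnn : (0 : ℝ) ≤ (w : ℝ) := w.2.1
    have hwle : (w : ℝ) ≤ 1 := w.2.2
    set v : I := ⟨(w : ℝ) / 2, by constructor <;> linarith⟩ with hv
    have hvle : (v : ℝ) ≤ 1 / 2 := by rw [hv]; simpa using by linarith
    have htrans : (h.trans p) v = h w := by
      rw [trans_apply_left h p v hvle]
      have : 2 * (v : ℝ) = (w : ℝ) := by rw [hv]; ring
      rw [this, h.extend_extends']
    have hjcv : ((j.castSucc : Fin ((k : ℕ) + 1 + 1)) : ℕ) ≤ (k : ℕ) := by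
      simpa using j.is_le
    have hmem : v ∈ Set.Icc (t (Fin.castLE hk1n j).castSucc) (t (Fin.castLE hk1n j).succ) := by
      constructor
      · rw [← Subtype.coe_le_coe]
        have e1 : (s j.castSucc : ℝ) = 2 * (t (Fin.castLE hcast j.castSucc) : ℝ) :=
          hsval j.castSucc hjcv
        have e2 : Fin.castLE hcast j.castSucc = (Fin.castLE hk1n j).castSucc := rfl
        have := Subtype.coe_le_coe.mpr hw1
        rw [e1, e2] at this
        show (t (Fin.castLE hk1n j).castSucc : ℝ) ≤ (w : ℝ) / 2
        linarith
      · rw [← Subtype.coe_le_coe]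
        have e1 : (s j.succ : ℝ) ≤ 2 * (t (Fin.castLE hcast j.succ) : ℝ) := hs_le j.succ
        have e2 : Fin.castLE hcast j.succ = (Fin.castLE hk1n j).succ := rfl
        have := Subtype.coe_le_coe.mpr hw2
        rw [e2] at e1
        show (w : ℝ) / 2 ≤ (t (Fin.castLE hk1n j).succ : ℝ)
        linarith
    rw [← htrans]
    exact hcov (Fin.castLE hk1n j) ⟨v, hmem, rfl⟩
  obtain ⟨γ₀, hγpieces, hγnodes, hγhom⟩ :=
    hfh ((k : ℕ) + 1) s hs0 hslast hsmono V hVopen hVcov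
  have half2 : ∀ w : I, 1 / 2 ≤ (w : ℝ) → (γ₀.trans p) w = (h.trans p) w := by
    intro w hw
    rw [trans_apply_right γ₀ p w hw, trans_apply_right h p w hw]
  refine ⟨γ₀.trans p, ?_, ?_, hγhom.hcomp (Path.Homotopic.refl p)⟩
  · -- pieces
    rintro i _ ⟨w, ⟨hw1, hw2⟩, rfl⟩
    rcases lt_or_ge (w : ℝ) (1 / 2) with hw | hw
    · have hic : i.castSucc ≤ k :=
        hkmax _ (lt_of_le_of_lt (Subtype.coe_le_coe.mpr hw1) hw)
      have hik : (i : ℕ) ≤ (k : ℕ) := by simpa [Fin.le_def] using hic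
      set j : Fin ((k : ℕ) + 1) := ⟨(i : ℕ), by omega⟩ with hj
      have hwnn : (0 : ℝ) ≤ (w : ℝ) := w.2.1
      have hmem2 : 2 * (w : ℝ) ∈ Set.Icc (0 : ℝ) 1 := ⟨by linarith, by linarith⟩
      have happ : (γ₀.trans p) w = γ₀ ⟨2 * (w : ℝ), hmem2⟩ := by
        rw [trans_apply_left γ₀ p w (le_of_lt hw), γ₀.extend_apply]
      have hUV : V j = U i := by
        have : Fin.castLE hk1n j = i := Fin.ext rfl
        simp only [hV]
        rw [this]
      rw [happ, ← hUV]
      apply hγpieces j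
      refine ⟨⟨2 * (w : ℝ), hmem2⟩, ⟨?_, ?_⟩, rfl⟩
      · rw [← Subtype.coe_le_coe]
        have e1 : (s j.castSucc : ℝ) = 2 * (t (Fin.castLE hcast j.castSucc) : ℝ) :=
          hsval j.castSucc (by simpa using hik)
        have e2 : Fin.castLE hcast j.castSucc = i.castSucc := Fin.ext rfl
        rw [e1, e2]
        have := Subtype.coe_le_coe.mpr hw1
        show 2 * (t i.castSucc : ℝ) ≤ 2 * (w : ℝ)
        linarith
      · rw [← Subtype.coe_le_coe]
        show 2 * (w : ℝ) ≤ (s j.succ : ℝ)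
        have e2 : Fin.castLE hcast j.succ = i.succ := Fin.ext rfl
        simp only [hs, Set.coe_projIcc, e2]
        have h2w : 2 * (w : ℝ) ≤ 2 * (t i.succ : ℝ) := by
          have := Subtype.coe_le_coe.mpr hw2; linarith
        have h2w1 : 2 * (w : ℝ) ≤ 1 := by linarith
        exact le_max_of_le_right (le_min h2w1 h2w)
    · rw [half2 w hw]
      exact hcov i ⟨w, ⟨hw1, hw2⟩, rfl⟩
  · -- nodes
    intro i
    rcases lt_or_ge (t i : ℝ) (1 / 2) with hi | hi
    · have hik : (i : ℕ) ≤ (k : ℕ) := Fin.le_def.mp (hkmax i hi)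
      set j : Fin ((k : ℕ) + 1 + 1) := ⟨(i : ℕ), by omega⟩ with hj
      have hji : Fin.castLE hcast j = i := Fin.ext rfl
      have hsj : (s j : ℝ) = 2 * (t i : ℝ) := by rw [hsval j hik, hji]
      calc (γ₀.trans p) (t i) = γ₀.extend (2 * (t i : ℝ)) :=
            trans_apply_left γ₀ p (t i) (le_of_lt hi)
        _ = γ₀.extend (s j) := by rw [hsj]
        _ = γ₀ (s j) := γ₀.extend_extends' (s j)
        _ = h (s j) := hγnodes j
        _ = h.extend (s j) := (h.extend_extends' (s j)).symm
        _ = h.extend (2 * (t i : ℝ)) := by rw [hsj]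
        _ = (h.trans p) (t i) := (trans_apply_left h p (t i) (le_of_lt hi)).symm
    · exact half2 (t i) hi

/-- for a subset `H` and a subgroup `K ⊇ π₁^qs(X, x)` of `π₁(X, x)`,
one has `H ⊆ K ↔ π_H^qs(X, x) ⊆ K`; in particular `π_K^qs(X, x) = K`. -/
theorem stmt8 (x : X) (H : Set (FundamentalGroup X x)) (K : Subgroup (FundamentalGroup X x))
    (hK : qs x ⊆ (K : Set (FundamentalGroup X x))) :
    (H ⊆ (K : Set (FundamentalGroup X x)) ↔ qsSet x H ⊆ (K : Set (FundamentalGroup X x))) ∧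
    qsSet x ↑K = (K : Set (FundamentalGroup X x)) := by
  have key : ∀ H' : Set (FundamentalGroup X x), H' ⊆ (K : Set (FundamentalGroup X x)) →
      qsSet x H' ⊆ (K : Set (FundamentalGroup X x)) := by
    rintro H' hH' p ⟨f, h, rfl, hhH, hfh⟩
    have hqs : pathClass (f.trans h.symm) ∈ qs x := by
      refine ⟨f.trans h.symm, h.trans h.symm, rfl, ?_, hfh.trans h.symm⟩
      simp only [SetLike.mem_coe, Subgroup.mem_bot]
      exact pathClass_trans_symm h
    have h2 : pathClass (f.trans h.symm) ∈ K := hK hqs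
    rw [pathClass_trans] at h2
    have hhK : pathClass h ∈ K := hH' hhH
    have hsymm : pathClass h.symm = (pathClass h)⁻¹ := by
      have := pathClass_trans_symm h
      rw [pathClass_trans] at this
      exact eq_inv_of_mul_eq_one_left this
    rw [hsymm] at h2
    have : pathClass f = pathClass h * ((pathClass h)⁻¹ * pathClass f) := by group
    rw [this]
    exact K.mul_mem hhK h2
  have incl : ∀ H' : Set (FundamentalGroup X x), H' ⊆ qsSet x H' := by
    intro H' p hp
    obtain ⟨f, hf⟩ := pathClass_surjective p
    exact ⟨f, f, hf, hf ▸ hp, hcloseRefl f⟩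
  refine ⟨⟨fun hHK => key H hHK, fun hq => (incl H).trans hq⟩, ?_⟩
  exact Set.Subset.antisymm (key _ le_rfl) (incl _)
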